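/- Let γ ∈ SGl(V) be a semilinear automorphism whose associated automorphism g = π(γ) maps the subring ℂ[[z]] ⊆ K onto itself. If W ⊆ V is a ℂ-subspace such that W ∩ V₊ is finite-dimensional over ℂ and V/(W + V₊) is finite-dimensional over ℂ, then γ(W) ∩ V₊ is finite-dimensional over ℂ and V/(γ(W) + V₊) is finite-dimensional over ℂ; that is, γ maps points of the Sato Grassmannian of (V, V₊) to points of the Sato Grassmannian. -/

import Mathlib

set_option synthInstance.maxHeartbeats 1000000
set_option maxHeartbeats 2000000


noncomputable section

/-- `K = ℂ((z))`, the field of formal Laurent series over `ℂ`. -/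
abbrev K : Type := LaurentSeries ℂ

/-- `V = Kⁿ`. -/
abbrev V (n : ℕ) : Type := Fin n → K

/-- `γ` is semilinear with associated `ℂ`-algebra automorphism `g`. -/
def IsSemilinearWith {n : ℕ} (γ : V n ≃ₗ[ℂ] V n) (g : K ≃ₐ[ℂ] K) : Prop :=
  ∀ (f : K) (v : V n), γ (f • v) = g f • γ v

/-- `V₊ = ℂ[[z]]ⁿ ⊆ V`, the `ℂ`-subspace of vectors all of whose components have
vanishing Laurent coefficients in negative degrees. -/
def Vplus (n : ℕ) : Submodule ℂ (V n) where
  carrier := {v | ∀ i : Fin n, ∀ k : ℤ, k < 0 → (v i).coeff k = 0}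
  add_mem' := by
    intro u v hu hv i k hk
    show (u i + v i).coeff k = 0
    rw [HahnSeries.coeff_add, hu i k hk, hv i k hk, add_zero]
  zero_mem' := by intro i k hk; simp
  smul_mem' := by
    intro c v hv i k hk
    show (c • v i).coeff k = 0
    rw [HahnSeries.coeff_smul, hv i k hk, smul_zero]

/-- The subring `ℂ[[z]] ⊆ K` of formal power series. -/
def PowerSeriesSet : Set K := {f | ∀ k : ℤ, k < 0 → f.coeff k = 0}


section Aux




/-- coefficients vanish below m -/
def Bdd (m : ℤ) (f : K) : Prop := ∀ k : ℤ, k < m → f.coeff k = 0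

lemma bdd_mul {a b : ℤ} {f h : K} (hf : Bdd a f) (hh : Bdd b h) : Bdd (a + b) (f * h) := by
  intro k hk
  rw [HahnSeries.coeff_mul]
  apply Finset.sum_eq_zero
  rintro ⟨i, j⟩ hij
  rw [Finset.mem_addAntidiagonal] at hij
  obtain ⟨-, -, hsum⟩ := hij
  by_cases hi : i < a
  · simp [hf i hi]
  · have : j < b := by omega
    simp [hh j this]

lemma bdd_one : Bdd 0 (1 : K) := by
  intro k hk
  rw [HahnSeries.coeff_one, if_neg (by omega)]

lemma bdd_pow {f : K} (hf : Bdd 1 f) (M : ℕ) : Bdd M (f ^ M) := by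
  induction M with
  | zero => simpa using bdd_one
  | succ m ih =>
    have := bdd_mul ih hf
    rw [pow_succ]
    intro k hk
    exact this k (by push_cast; omega)

lemma bdd_exists (f : K) : ∃ m : ℤ, Bdd m f := by
  by_cases hf : f = 0
  · exact ⟨0, by intro k _; simp [hf]⟩
  · exact ⟨f.order, fun k hk => HahnSeries.coeff_eq_zero_of_lt_order hk⟩

/-- member of PowerSeriesSet iff Bdd 0 -/
lemma mem_P_iff {f : K} : f ∈ PowerSeriesSet ↔ Bdd 0 f := Iff.rfl

lemma mem_P_of_coe (F : PowerSeries ℂ) : (HahnSeries.ofPowerSeries ℤ ℂ F) ∈ PowerSeriesSet := by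
  intro k hk
  rw [HahnSeries.ofPowerSeries_apply, HahnSeries.embDomain_notin_range]
  rintro ⟨m, hm⟩
  simp only [Nat.castOrderEmbedding_apply] at hm
  omega

lemma exists_coe_of_mem_P {f : K} (hf : f ∈ PowerSeriesSet) :
    ∃ F : PowerSeries ℂ, (HahnSeries.ofPowerSeries ℤ ℂ F) = f := by
  refine ⟨PowerSeries.mk fun m => f.coeff (m : ℤ), ?_⟩
  ext k
  by_cases hk : 0 ≤ k
  · obtain ⟨m, rfl⟩ := Int.eq_ofNat_of_zero_le hk
    rw [HahnSeries.ofPowerSeries_apply_coeff]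
    simp
  · rw [hf k (by omega), HahnSeries.ofPowerSeries_apply, HahnSeries.embDomain_notin_range]
    rintro ⟨m, hm⟩
    simp only [Nat.castOrderEmbedding_apply] at hm
    omega

lemma inv_mem_P {f : K} (hf : f ∈ PowerSeriesSet) (h0 : f.coeff 0 ≠ 0) :
    f⁻¹ ∈ PowerSeriesSet := by
  obtain ⟨F, rfl⟩ := exists_coe_of_mem_P hf
  have hc : PowerSeries.constantCoeff F ≠ 0 := by
    intro hc
    apply h0
    have h00 := HahnSeries.ofPowerSeries_apply_coeff (Γ := ℤ) F 0
    rw [Nat.cast_zero] at h00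
    rw [h00, PowerSeries.coeff_zero_eq_constantCoeff, hc]
  obtain ⟨u, hu⟩ := PowerSeries.isUnit_iff_constantCoeff.mpr (IsUnit.mk0 _ hc)
  have hmul : F * (↑u⁻¹ : PowerSeries ℂ) = 1 := by
    rw [← hu]; exact u.mul_inv
  have : (HahnSeries.ofPowerSeries ℤ ℂ F) * (HahnSeries.ofPowerSeries ℤ ℂ (↑u⁻¹ : PowerSeries ℂ)) = 1 := by
    rw [← map_mul, hmul, map_one]
  rw [inv_eq_of_mul_eq_one_right this]
  exact mem_P_of_coe _



/-- the variable z -/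
abbrev zz : K := HahnSeries.single (1 : ℤ) (1 : ℂ)

lemma z_mem_P : zz ∈ PowerSeriesSet := by
  intro k hk
  rw [HahnSeries.coeff_single, if_neg (by omega)]

lemma single_int_pow (M : ℕ) : zz ^ M = HahnSeries.single (M : ℤ) (1 : ℂ) := by
  rw [HahnSeries.single_pow, one_pow, nsmul_eq_mul, mul_one]

lemma g_single_bdd (g : K ≃ₐ[ℂ] K) (hgP : ∀ f ∈ PowerSeriesSet, g f ∈ PowerSeriesSet)
    (hgP' : ∀ f ∈ PowerSeriesSet, g.symm f ∈ PowerSeriesSet) : Bdd 1 (g zz) := by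
  have hz : g zz ∈ PowerSeriesSet := hgP zz z_mem_P
  intro k hk
  rcases lt_or_eq_of_le (by omega : k ≤ 0) with hk0 | rfl
  · exact hz k hk0
  by_contra h0
  have hinv : (g zz)⁻¹ ∈ PowerSeriesSet := inv_mem_P hz h0
  have hsymm : g.symm ((g zz)⁻¹) ∈ PowerSeriesSet := hgP' _ hinv
  have hval : g.symm ((g zz)⁻¹) = zz⁻¹ := by
    rw [map_inv₀, AlgEquiv.symm_apply_apply]
  have hzinv : zz⁻¹ = HahnSeries.single (-1 : ℤ) (1 : ℂ) := by
    apply inv_eq_of_mul_eq_one_right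
    rw [HahnSeries.single_mul_single, mul_one, add_neg_cancel]
    rfl
  have := hsymm (-1) (by omega)
  rw [hval, hzinv, HahnSeries.coeff_single_same] at this
  exact one_ne_zero this

lemma bdd_map (g : K ≃ₐ[ℂ] K) (hgP : ∀ f ∈ PowerSeriesSet, g f ∈ PowerSeriesSet)
    (hgz : Bdd 1 (g zz)) {M : ℕ} {f : K} (hf : Bdd (M : ℤ) f) : Bdd (M : ℤ) (g f) := by
  set u : K := HahnSeries.single (-(M : ℤ)) 1 * f with hu_def
  have hu : u ∈ PowerSeriesSet := by
    intro k hk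
    have h2 : u.coeff (k + M + -(M:ℤ)) = 1 * f.coeff (k + M) :=
      HahnSeries.coeff_single_mul_add (a := k + M) (b := -(M:ℤ)) (r := (1:ℂ)) (x := f)
    simp only [add_neg_cancel_right, one_mul] at h2
    rw [h2]
    exact hf _ (by omega)
  have hfu : f = HahnSeries.single (M : ℤ) 1 * u := by
    rw [hu_def, ← mul_assoc, HahnSeries.single_mul_single, mul_one, add_neg_cancel]
    rw [show (HahnSeries.single (0:ℤ) (1:ℂ)) = 1 from rfl, one_mul]
  rw [hfu, map_mul]
  have h1 : Bdd (M : ℤ) (g (HahnSeries.single (M : ℤ) 1)) := by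
    rw [← single_int_pow, map_pow]
    exact bdd_pow hgz M
  have := bdd_mul h1 (hgP u hu)
  rwa [add_zero] at this




/-- shifted lattices -/
def A (n : ℕ) (m : ℤ) : Submodule ℂ (V n) where
  carrier := {v | ∀ i : Fin n, Bdd m (v i)}
  add_mem' := by
    intro u v hu hv i k hk
    show (u i + v i).coeff k = 0
    rw [HahnSeries.coeff_add, hu i k hk, hv i k hk, add_zero]
  zero_mem' := by intro i k hk; simp
  smul_mem' := by
    intro c v hv i k hk
    show (c • v i).coeff k = 0
    rw [HahnSeries.coeff_smul, hv i k hk, smul_zero]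

lemma mem_A {n : ℕ} {m : ℤ} {v : V n} : v ∈ A n m ↔ ∀ i, Bdd m (v i) := Iff.rfl

lemma Vplus_eq_A {n : ℕ} : Vplus n = A n 0 := by
  ext v
  exact ⟨fun hv i => hv i, fun hv i => hv i⟩

lemma A_mono {n : ℕ} {m m' : ℤ} (hm : m' ≤ m) : A n m ≤ A n m' :=
  fun v hv i k hk => hv i k (by omega)

lemma smul_mem_A {n : ℕ} {m m' : ℤ} {f : K} (hf : Bdd m' f) {w : V n} (hw : w ∈ A n m) :
    f • w ∈ A n (m' + m) := by
  intro i
  show Bdd (m' + m) (f * w i)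
  exact bdd_mul hf (hw i)

lemma vec_bdd_exists {n : ℕ} (w : V n) : ∃ m : ℤ, w ∈ A n m := by
  choose m hm using fun i => bdd_exists (w i)
  obtain ⟨b, hb⟩ := (Finset.univ.image fun i => -(m i)).exists_le
  refine ⟨-b, fun i k hk => hm i k ?_⟩
  have := hb _ (Finset.mem_image_of_mem _ (Finset.mem_univ i))
  omega

/-- standard basis vector -/
def ee {n : ℕ} (j : Fin n) : V n := Pi.single j (1 : K)

lemma vec_decomp {n : ℕ} (v : V n) : v = ∑ j, (v j) • ee j := by
  conv_lhs => rw [← Finset.univ_sum_single v]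
  refine Finset.sum_congr rfl fun j _ => ?_
  ext i
  by_cases hij : i = j
  · subst hij; simp [ee]
  · simp [ee, Pi.single_apply, Ne.symm hij, hij]

lemma semilin_apply {n : ℕ} (γ : V n ≃ₗ[ℂ] V n) (g : K ≃ₐ[ℂ] K)
    (h : IsSemilinearWith γ g) (v : V n) : γ v = ∑ j, g (v j) • γ (ee j) := by
  conv_lhs => rw [vec_decomp v]
  rw [map_sum]
  exact Finset.sum_congr rfl fun j _ => h (v j) (ee j)

lemma semilin_symm {n : ℕ} (γ : V n ≃ₗ[ℂ] V n) (g : K ≃ₐ[ℂ] K)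
    (h : IsSemilinearWith γ g) : IsSemilinearWith γ.symm g.symm := by
  intro f v
  apply γ.injective
  rw [γ.apply_symm_apply, h, AlgEquiv.apply_symm_apply, γ.apply_symm_apply]

lemma semilin_image {n : ℕ} (γ : V n ≃ₗ[ℂ] V n) (g : K ≃ₐ[ℂ] K)
    (h : IsSemilinearWith γ g) (hgP : ∀ f ∈ PowerSeriesSet, g f ∈ PowerSeriesSet)
    (hgz : Bdd 1 (g zz)) :
    ∃ N : ℤ, ∀ (M : ℕ), ∀ v ∈ A n (M : ℤ), γ v ∈ A n (N + M) := by
  choose m hm using fun j : Fin n => vec_bdd_exists (γ (ee j))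
  obtain ⟨b, hb⟩ := (Finset.univ.image fun j => -(m j)).exists_le
  refine ⟨-b, fun M v hv => ?_⟩
  rw [semilin_apply γ g h v]
  apply Submodule.sum_mem
  intro j _
  have h1 : Bdd (M : ℤ) (g (v j)) := bdd_map g hgP hgz (hv j)
  have h2 : γ (ee j) ∈ A n (-b) := by
    refine A_mono ?_ (hm j)
    have := hb _ (Finset.mem_image_of_mem _ (Finset.mem_univ j))
    omega
  have := smul_mem_A h1 h2
  rwa [show (M : ℤ) + -b = -b + M by ring] at this



lemma coeff_sum {α : Type*} (s : Finset α) (f : α → K) (m : ℤ) :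
    (∑ a ∈ s, f a).coeff m = ∑ a ∈ s, (f a).coeff m :=
  map_sum (HahnSeries.coeff.addMonoidHom m) f s

/-- monomial basis vectors with negative exponents -/
def mono (n N' : ℕ) (i : Fin n) (k : Fin N') : V n :=
  Pi.single i (HahnSeries.single ((k : ℤ) - N') (1 : ℂ))

def Fneg (n N' : ℕ) : Submodule ℂ (V n) :=
  Submodule.span ℂ (Set.range fun pr : Fin n × Fin N' => mono n N' pr.1 pr.2)

lemma Fneg_fg (n N' : ℕ) : (Fneg n N').FG :=
  Submodule.fg_span (Set.finite_range _)

lemma A_neg_le (n N' : ℕ) : A n (-(N' : ℤ)) ≤ Vplus n ⊔ Fneg n N' := by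
  intro v hv
  set w : V n := ∑ i, ∑ k : Fin N', ((v i).coeff ((k : ℤ) - N')) • mono n N' i k with hw_def
  have hw : w ∈ Fneg n N' := by
    apply Submodule.sum_mem
    intro i _
    apply Submodule.sum_mem
    intro k _
    exact Submodule.smul_mem _ _ (Submodule.subset_span ⟨(i, k), rfl⟩)
  have hwcoeff : ∀ (i : Fin n) (m : ℤ), m < 0 →
      (w i).coeff m = if h : -(N':ℤ) ≤ m then (v i).coeff m else 0 := by
    intro i m hm
    have hwi : w i = ∑ k : Fin N', ((v i).coeff ((k : ℤ) - N')) •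
        HahnSeries.single ((k : ℤ) - N') (1 : ℂ) := by
      rw [hw_def]
      rw [Finset.sum_apply]
      rw [Finset.sum_eq_single i]
      · rw [Finset.sum_apply]
        refine Finset.sum_congr rfl fun k _ => ?_
        simp [mono]
      · intro i' _ hi'
        rw [Finset.sum_apply]
        apply Finset.sum_eq_zero
        intro k _
        simp [mono, Pi.single_apply, hi']
      · intro hi; exact absurd (Finset.mem_univ i) hi
    rw [hwi, coeff_sum]
    by_cases hmn : -(N':ℤ) ≤ m
    · rw [dif_pos hmn]
      have hk0 : ((m + N').toNat) < N' := by omega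
      rw [Finset.sum_eq_single (⟨(m + N').toNat, hk0⟩ : Fin N')]
      · rw [HahnSeries.coeff_smul, HahnSeries.coeff_single]
        have hidx : ((⟨(m + N').toNat, hk0⟩ : Fin N') : ℤ) - N' = m := by
          simp only [Fin.val_mk]
          omega
        rw [hidx, if_pos rfl, smul_eq_mul, mul_one]
      · intro k _ hk
        rw [HahnSeries.coeff_smul, HahnSeries.coeff_single, if_neg, smul_zero]
        intro hmk
        apply hk
        apply Fin.ext
        simp only [Fin.val_mk]
        omega
      · intro hmem; exact absurd (Finset.mem_univ _) hmem
    · rw [dif_neg hmn]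
      apply Finset.sum_eq_zero
      intro k _
      rw [HahnSeries.coeff_smul, HahnSeries.coeff_single, if_neg (by omega), smul_zero]
  have hvw : v - w ∈ Vplus n := by
    intro i m hm
    show ((v - w) i).coeff m = 0
    rw [Pi.sub_apply, HahnSeries.coeff_sub, hwcoeff i m hm]
    by_cases hmn : -(N':ℤ) ≤ m
    · rw [dif_pos hmn, sub_self]
    · rw [dif_neg hmn, sub_zero]
      exact hv i m (by omega)
  have hdecomp : v = (v - w) + w := by abel
  rw [hdecomp]
  exact Submodule.add_mem _ (Submodule.mem_sup_left hvw) (Submodule.mem_sup_right hw)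




end Aux

/-- A `ℂ`-subspace `W ⊆ V` is a point of the Sato Grassmannian of `(V, V₊)` if both
`W ∩ V₊` and `V/(W + V₊)` are finite dimensional over `ℂ`. If `γ` is a semilinear
automorphism whose associated automorphism `g = π(γ)` maps `ℂ[[z]]` onto itself, then
`γ` maps points of the Sato Grassmannian to points of the Sato Grassmannian. -/
theorem semilinear_preserves_grassmannian (n : ℕ) (hn : 1 ≤ n)
    (γ : V n ≃ₗ[ℂ] V n) (g : K ≃ₐ[ℂ] K) (h : IsSemilinearWith γ g)
    (hg : g '' PowerSeriesSet = PowerSeriesSet) (W : Submodule ℂ (V n))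
    (h1 : FiniteDimensional ℂ ↥(W ⊓ Vplus n))
    (h2 : FiniteDimensional ℂ (V n ⧸ (W ⊔ Vplus n))) :
    FiniteDimensional ℂ ↥(W.map (γ : V n →ₗ[ℂ] V n) ⊓ Vplus n) ∧
    FiniteDimensional ℂ (V n ⧸ (W.map (γ : V n →ₗ[ℂ] V n) ⊔ Vplus n)) := by
  set γ' : V n →ₗ[ℂ] V n := (γ : V n →ₗ[ℂ] V n) with hγ'
  -- g and g.symm preserve power series
  have hgP : ∀ f ∈ PowerSeriesSet, g f ∈ PowerSeriesSet := by
    intro f hf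
    rw [← hg]
    exact ⟨f, hf, rfl⟩
  have hgP' : ∀ f ∈ PowerSeriesSet, g.symm f ∈ PowerSeriesSet := by
    intro f hf
    rw [← hg] at hf
    obtain ⟨u, hu, rfl⟩ := hf
    rwa [AlgEquiv.symm_apply_apply]
  have hgP'' : ∀ f ∈ PowerSeriesSet, g.symm.symm f ∈ PowerSeriesSet := by
    simpa [AlgEquiv.symm_symm] using hgP
  have hgz : Bdd 1 (g zz) := g_single_bdd g hgP hgP'
  have hgz' : Bdd 1 (g.symm zz) := g_single_bdd g.symm hgP' hgP''
  -- the image of V₊ under γ is bounded below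
  obtain ⟨N1, hN1⟩ := semilin_image γ g h hgP hgz
  have hImage : Submodule.map γ' (Vplus n) ≤ A n N1 := by
    rintro v ⟨w, hw, rfl⟩
    have hw0 : w ∈ A n ((0 : ℕ) : ℤ) := by
      rw [Nat.cast_zero, ← Vplus_eq_A]; exact hw
    have := hN1 0 w hw0
    rwa [Nat.cast_zero, add_zero] at this
  -- deep enough lattices are contained in γ(V₊)
  obtain ⟨N2, hN2⟩ := semilin_image γ.symm g.symm (semilin_symm γ g h) hgP' hgz'
  set M : ℕ := (-N2).toNat with hM
  have hA_le_map : A n (M : ℤ) ≤ Submodule.map γ' (Vplus n) := by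
    intro v hv
    refine ⟨γ.symm v, ?_, γ.apply_symm_apply v⟩
    rw [Vplus_eq_A]
    refine A_mono ?_ (hN2 M v hv)
    omega
  constructor
  · -- finite dimensionality of γ(W) ⊓ V₊
    set S := W.map γ' ⊓ Vplus n with hS
    -- truncation map
    set τ : V n →ₗ[ℂ] (Fin n → Fin M → ℂ) :=
      { toFun := fun v i k => (v i).coeff ((k : ℕ) : ℤ)
        map_add' := by
          intro u v
          funext i k
          exact HahnSeries.coeff_add
        map_smul' := by
          intro c v
          funext i k
          exact HahnSeries.coeff_smul } with hτ
    haveI hfd : FiniteDimensional ℂ ↥(Submodule.map γ' (W ⊓ Vplus n)) :=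
      Module.Finite.equiv (Submodule.equivMapOfInjective γ' γ.injective (W ⊓ Vplus n))
    have hker : S ⊓ LinearMap.ker τ ≤ Submodule.map γ' (W ⊓ Vplus n) := by
      rintro v ⟨⟨hvW, hvP⟩, hvker⟩
      replace hvker : τ v = 0 := hvker
      have hvA : v ∈ A n (M : ℤ) := by
        intro i k hk
        by_cases hk0 : k < 0
        · exact hvP i k hk0
        · have hkM : k.toNat < M := by omega
          have h0 := congrFun (congrFun hvker i) ⟨k.toNat, hkM⟩
          have h1 : (v i).coeff ((k.toNat : ℕ) : ℤ) = 0 := h0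
          rwa [Int.toNat_of_nonneg (by omega : (0:ℤ) ≤ k)] at h1
      have hvmem : v ∈ Submodule.map γ' (Vplus n) := hA_le_map hvA
      obtain ⟨u, hu, huv⟩ := hvmem
      obtain ⟨u', hu', huv'⟩ := hvW
      have huu : u' = u := γ.injective (by rw [show γ u' = γ' u' from rfl,
        show γ u = γ' u from rfl, huv, huv'])
      exact ⟨u, ⟨huu ▸ hu', hu⟩, huv⟩
    have hSfg : S.FG := by
      apply Submodule.fg_of_fg_map_of_fg_inf_ker τ
      · exact (Submodule.fg_iff_finiteDimensional _).mpr inferInstance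
      · exact (Submodule.fg_iff_finiteDimensional _).mpr
          (Submodule.finiteDimensional_of_le hker)
    exact (Submodule.fg_iff_finiteDimensional S).mp hSfg
  · -- finite dimensionality of V ⧸ (γ(W) + V₊)
    set p := W.map γ' ⊔ Vplus n with hp
    set q := (W ⊔ Vplus n).map γ' with hq
    haveI hq_fd : FiniteDimensional ℂ (V n ⧸ q) :=
      (Submodule.Quotient.equiv (W ⊔ Vplus n) q γ rfl).finiteDimensional
    obtain ⟨T, hT⟩ := Module.finite_def.mp hq_fd
    choose lift hlift using Submodule.mkQ_surjective q
    have htop_le : (⊤ : Submodule ℂ (V n)) ≤ q ⊔ Submodule.span ℂ (lift '' ↑T) := by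
      intro v _
      have hv : q.mkQ v ∈ Submodule.span ℂ (↑T : Set (V n ⧸ q)) := hT ▸ Submodule.mem_top
      have himg : (↑T : Set (V n ⧸ q)) = q.mkQ '' (lift '' ↑T) := by
        rw [Set.image_image]
        simp only [hlift, Set.image_id']
      rw [himg, ← Submodule.map_span] at hv
      obtain ⟨w, hw, hwv⟩ := hv
      have : v - w ∈ q := (Submodule.Quotient.eq q).mp
        (by rw [← Submodule.mkQ_apply, ← Submodule.mkQ_apply, hwv])
      have hv' : v = w + (v - w) := by abel
      rw [hv']
      exact Submodule.add_mem _ (Submodule.mem_sup_right hw) (Submodule.mem_sup_left this)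
    set N1' : ℕ := (-N1).toNat with hN1'
    have hq_le : q ≤ p ⊔ Fneg n N1' := by
      rw [hq, Submodule.map_sup]
      apply sup_le
      · exact le_trans (le_sup_left : W.map γ' ≤ p) le_sup_left
      · refine le_trans hImage ?_
        refine le_trans (A_mono (by omega : -(N1' : ℤ) ≤ N1)) ?_
        refine le_trans (A_neg_le n N1') ?_
        exact sup_le_sup_right (le_sup_right : Vplus n ≤ p) _
    have htop : (⊤ : Submodule ℂ (V n)) ≤ p ⊔ Fneg n N1' ⊔ Submodule.span ℂ (lift '' ↑T) :=
      le_trans htop_le (sup_le_sup_right hq_le _)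
    apply Module.finite_def.mpr
    have hmap_top : (⊤ : Submodule ℂ (V n ⧸ p)) =
        Submodule.map p.mkQ (p ⊔ Fneg n N1' ⊔ Submodule.span ℂ (lift '' ↑T)) := by
      apply le_antisymm ?_ le_top
      intro x _
      obtain ⟨v, rfl⟩ := Submodule.mkQ_surjective p x
      exact ⟨v, htop Submodule.mem_top, rfl⟩
    rw [hmap_top, Submodule.map_sup, Submodule.map_sup]
    refine Submodule.FG.sup (Submodule.FG.sup ?_ ?_) ?_
    · have hble : Submodule.map p.mkQ p ≤ ⊥ := by
        rintro x ⟨v, hv, rfl⟩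
        simpa [Submodule.mkQ_apply] using (Submodule.Quotient.mk_eq_zero p).mpr hv
      rw [le_bot_iff.mp hble]
      exact Submodule.fg_bot
    · exact (Fneg_fg n N1').map _
    · exact (Submodule.fg_span ((T.finite_toSet).image lift)).map _

end
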